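/- In the XOR-based (n,n)-threshold construction with bias p ∈ (1/2, 1), for every subset F ⊂ [n] with |F| = n−1, the average conditional min-entropy satisfies R_∞(S | V_F) = R_∞(S) = −log p; i.e., the scheme is min-entropy secure. -/

import Mathlib

open Finset Real Filter

/-- `P` is a probability mass function on the finite set `α`. -/
def IsPMF {α : Type*} [Fintype α] (P : α → ℝ) : Prop :=
  (∀ x, 0 ≤ P x) ∧ ∑ x, P x = 1

/-- Min-entropy `R_∞(X) = - log max_x P(x)`. -/
noncomputable def minEnt {α : Type*} [Fintype α] [Nonempty α] (P : α → ℝ) : ℝ :=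
  - Real.log (⨆ x, P x)

/-- Rényi entropy of order `a`: `R_a(X) = (1/(1-a)) log Σ_x P(x)^a`. -/
noncomputable def renyiEnt {α : Type*} [Fintype α] (a : ℝ) (P : α → ℝ) : ℝ :=
  (1 / (1 - a)) * Real.log (∑ x, P x ^ a)

/-- Marginal on the first component of a joint distribution. -/
noncomputable def margX {α β : Type*} [Fintype α] [Fintype β] (P : α × β → ℝ) : α → ℝ :=
  fun x => ∑ y, P (x, y)

/-- Marginal on the second component of a joint distribution. -/
noncomputable def margY {α β : Type*} [Fintype α] [Fintype β] (P : α × β → ℝ) : β → ℝ :=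
  fun y => ∑ x, P (x, y)

/-- Average conditional min-entropy
`R_∞(X|Y) = - log Σ_y P_Y(y) max_x P_{X|Y}(x|y)`. -/
noncomputable def condMinEnt {α β : Type*} [Fintype α] [Fintype β] [Nonempty α]
    (P : α × β → ℝ) : ℝ :=
  - Real.log (∑ y, margY P y * ⨆ x, P (x, y) / margY P y)

/-- Arimoto's conditional Rényi entropy of order `a`:
`R_a(X|Y) = (a/(1-a)) log Σ_y P_Y(y) (Σ_x P_{X|Y}(x|y)^a)^(1/a)`. -/
noncomputable def condRenyiEnt {α β : Type*} [Fintype α] [Fintype β]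
    (a : ℝ) (P : α × β → ℝ) : ℝ :=
  (a / (1 - a)) *
    Real.log (∑ y, margY P y * (∑ x, (P (x, y) / margY P y) ^ a) ^ (1 / a))

/-- Shannon entropy `H(X) = - Σ_x P(x) log P(x)`. -/
noncomputable def shannonEnt {α : Type*} [Fintype α] (P : α → ℝ) : ℝ :=
  ∑ x, Real.negMulLog (P x)

/-- Conditional Shannon entropy `H(X|Y) = H(XY) - H(Y)`. -/
noncomputable def condShannonEnt {α β : Type*} [Fintype α] [Fintype β]
    (P : α × β → ℝ) : ℝ :=
  shannonEnt P - shannonEnt (margY P)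

/-- Distribution of the random variable `X : Ω → α` under the pmf `μ` on `Ω`. -/
noncomputable def dist {Ω α : Type*} [Fintype Ω] [DecidableEq α]
    (μ : Ω → ℝ) (X : Ω → α) : α → ℝ :=
  fun x => ∑ ω, if X ω = x then μ ω else 0

/-- The joint pmf of `(S, V_1, …, V_m)` where `S, V_1, …, V_m` are i.i.d. on
`ZMod 2` with probability `p` of being `0`. -/
noncomputable def muXOR (m : ℕ) (p : ℝ) : ZMod 2 × (Fin m → ZMod 2) → ℝ :=
  fun sv => (if sv.1 = 0 then p else 1 - p) *
    ∏ j, (if sv.2 j = 0 then p else 1 - p)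

/-- The `i`-th share of the XOR-based `(n,n)`-threshold scheme: `V_i` for
`i ∈ [n-1]` and `V_n = S ⊕ V_1 ⊕ ⋯ ⊕ V_{n-1}` for the last index. -/
noncomputable def xorShare (n : ℕ) (i : Fin n)
    (ω : ZMod 2 × (Fin (n - 1) → ZMod 2)) : ZMod 2 :=
  if h : (i : ℕ) < n - 1 then ω.2 ⟨i, h⟩ else ω.1 + ∑ j, ω.2 j

/- ==== aux lemmas ==== -/

lemma zmod2_sum' (f : ZMod 2 → ℝ) : ∑ x, f x = f 0 + f 1 := by
  show ∑ x : Fin 2, f x = _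
  exact Fin.sum_univ_two f

lemma zmod2_sup' (f : ZMod 2 → ℝ) (h : f 1 ≤ f 0) : ⨆ x, f x = f 0 := by
  apply le_antisymm
  · apply ciSup_le; intro x
    have : x = 0 ∨ x = 1 := by revert x; decide
    rcases this with h'|h' <;> rw [h']
    exact h
  · exact le_ciSup (Set.finite_range f).bddAbove 0

lemma sum_prod_w' (m : ℕ) (p : ℝ) :
    ∑ v : Fin m → ZMod 2, ∏ j, (if v j = 0 then p else 1 - p) = 1 := by
  classical
  have h := Finset.prod_univ_sum (fun _ : Fin m => (Finset.univ : Finset (ZMod 2)))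
    (fun _ b => if b = 0 then p else 1 - p)
  rw [Fintype.piFinset_univ] at h
  rw [← h]
  have h1 : (∑ b : ZMod 2, if b = 0 then p else 1 - p) = 1 := by
    rw [zmod2_sum']
    simp [show (1 : ZMod 2) ≠ 0 by decide]
  simp [h1]

lemma dist_fst_muXOR' (m : ℕ) (p : ℝ) (s : ZMod 2) :
    (∑ ω : ZMod 2 × (Fin m → ZMod 2), if ω.1 = s then muXOR m p ω else 0)
      = if s = 0 then p else 1 - p := by
  unfold muXOR
  rw [Fintype.sum_prod_type]
  have h : ∀ a : ZMod 2,
      (∑ b : Fin m → ZMod 2, if (a, b).1 = s then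
        (if (a, b).1 = 0 then p else 1 - p) * ∏ j, (if (a, b).2 j = 0 then p else 1 - p)
        else 0) = if a = s then (if a = 0 then p else 1 - p) else 0 := by
    intro a
    by_cases hh : a = s
    · simp only [hh, if_true]
      rw [← Finset.mul_sum, sum_prod_w', mul_one]
    · simp [hh]
  rw [Finset.sum_congr rfl fun a _ => h a]
  rw [Finset.sum_ite_eq' Finset.univ s (fun a => if a = 0 then p else 1 - p)]
  simp

lemma muXOR_nonneg' (m : ℕ) (p : ℝ) (hp0 : 0 ≤ p) (hp1 : p ≤ 1)
    (ω : ZMod 2 × (Fin m → ZMod 2)) : 0 ≤ muXOR m p ω := by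
  unfold muXOR
  apply mul_nonneg
  · split_ifs <;> linarith
  · apply Finset.prod_nonneg; intro j _; split_ifs <;> linarith

lemma sum_dist_fst_eq' {Ω α β : Type*} [Fintype Ω] [Fintype β] [DecidableEq α]
    [DecidableEq β] (μ : Ω → ℝ) (X : Ω → α × β) (x : α) :
    ∑ y, (∑ ω, if X ω = (x, y) then μ ω else 0) = ∑ ω, if (X ω).1 = x then μ ω else 0 := by
  rw [Finset.sum_comm]
  refine Finset.sum_congr rfl fun ω _ => ?_
  by_cases h : (X ω).1 = x
  · rw [if_pos h]
    have h2 : ∀ y, (if X ω = (x, y) then μ ω else 0) = (if (X ω).2 = y then μ ω else 0) := by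
      intro y
      refine if_congr ?_ rfl rfl
      rw [Prod.ext_iff]; simp [h]
    rw [Finset.sum_congr rfl fun y _ => h2 y]
    rw [Finset.sum_ite_eq Finset.univ (X ω).2 (fun _ => μ ω)]
    simp
  · rw [if_neg h]
    apply Finset.sum_eq_zero; intro y _
    rw [if_neg]; intro hc; exact h (by rw [hc])

def xorFlip (m : ℕ) (i0 : ℕ) (ω : ZMod 2 × (Fin m → ZMod 2)) :
    ZMod 2 × (Fin m → ZMod 2) :=
  (ω.1 + 1, fun j => if (j : ℕ) = i0 then ω.2 j + 1 else ω.2 j)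


/-- In the XOR-based `(n,n)`-threshold construction with bias
`p ∈ (1/2, 1)`, for every `F ⊂ [n]` with `|F| = n - 1` we have
`R_∞(S | V_F) = R_∞(S) = - log p`. -/
theorem xor_scheme_minEnt_secure (n : ℕ) (hn : 2 ≤ n) (p : ℝ)
    (hp : 1 / 2 < p) (hp1 : p < 1) (F : Finset (Fin n)) (hF : F.card = n - 1) :
    condMinEnt (dist (muXOR (n - 1) p)
        (fun ω => (ω.1, fun j : F => xorShare n j.1 ω))) = - Real.log p ∧
    minEnt (dist (muXOR (n - 1) p) Prod.fst) = - Real.log p := by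
  classical
  have hp0 : (0:ℝ) < p := by linarith
  have hple : 1 - p ≤ p := by linarith
  have h1p : (0:ℝ) ≤ 1 - p := by linarith
  constructor
  · -- condMinEnt part
    set X : ZMod 2 × (Fin (n-1) → ZMod 2) → ZMod 2 × ({ x // x ∈ F } → ZMod 2) :=
      fun ω => (ω.1, fun j : F => xorShare n j.1 ω) with hX
    set P := dist (muXOR (n - 1) p) X with hPdef
    have hPexp : ∀ z, P z = ∑ ω, (if X ω = z then muXOR (n-1) p ω else 0) := fun z => rfl
    -- pick missing index
    have hFne : F ≠ Finset.univ := by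
      intro h
      rw [h, Finset.card_univ, Fintype.card_fin] at hF
      omega
    obtain ⟨i0, hi0⟩ : ∃ i : Fin n, i ∉ F := by
      by_contra h
      push_neg at h
      exact hFne (Finset.eq_univ_iff_forall.mpr h)
    set σ : ZMod 2 × (Fin (n-1) → ZMod 2) → ZMod 2 × (Fin (n-1) → ZMod 2) :=
      xorFlip (n-1) (i0 : ℕ) with hσ
    have hσσ : Function.Involutive σ := by
      intro ω
      refine Prod.ext ?_ ?_
      · show ω.1 + 1 + 1 = ω.1
        have h2 : ∀ a : ZMod 2, a + 1 + 1 = a := by decide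
        exact h2 ω.1
      · funext j
        show (if (j:ℕ) = (i0:ℕ) then (if (j:ℕ) = (i0:ℕ) then ω.2 j + 1 else ω.2 j) + 1
              else (if (j:ℕ) = (i0:ℕ) then ω.2 j + 1 else ω.2 j)) = ω.2 j
        split_ifs with h
        · have h2 : ∀ a : ZMod 2, a + 1 + 1 = a := by decide
          exact h2 _
        · rfl
    have hbij := hσσ.bijective
    -- shares are invariant under σ
    have hsh : ∀ ω, ∀ j : F, xorShare n (j : Fin n) (σ ω) = xorShare n (j : Fin n) ω := by
      intro ω j
      have hjF : (j : Fin n) ∈ F := j.2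
      have hji : (j : Fin n) ≠ i0 := fun h => hi0 (h ▸ hjF)
      unfold xorShare
      by_cases h : ((j : Fin n) : ℕ) < n - 1
      · rw [dif_pos h, dif_pos h]
        show (if ((⟨((j:Fin n):ℕ), h⟩ : Fin (n-1)) : ℕ) = (i0:ℕ) then ω.2 _ + 1 else ω.2 _) = _
        rw [if_neg]
        intro hc
        exact hji (Fin.ext hc)
      · rw [dif_neg h, dif_neg h]
        have hj' : ((j : Fin n) : ℕ) = n - 1 := by
          have := (j : Fin n).isLt; omega
        have hi0ne : (i0 : ℕ) ≠ n - 1 := by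
          intro hh
          exact hji (Fin.ext (hj'.trans hh.symm))
        have hi0lt : (i0 : ℕ) < n - 1 := by
          have := i0.isLt; omega
        show (σ ω).1 + ∑ k, (σ ω).2 k = ω.1 + ∑ k, ω.2 k
        have h1 : (σ ω).1 = ω.1 + 1 := rfl
        have h2 : ∀ k : Fin (n-1), (σ ω).2 k = ω.2 k + (if k = ⟨(i0:ℕ), hi0lt⟩ then 1 else 0) := by
          intro k
          show (if (k:ℕ) = (i0:ℕ) then ω.2 k + 1 else ω.2 k) = _
          by_cases hk : k = ⟨(i0:ℕ), hi0lt⟩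
          · rw [if_pos (by rw [hk]), if_pos hk]
          · rw [if_neg (fun hc => hk (Fin.ext hc)), if_neg hk, add_zero]
        rw [h1, Finset.sum_congr rfl fun k _ => h2 k, Finset.sum_add_distrib,
          Finset.sum_ite_eq' Finset.univ (⟨(i0:ℕ), hi0lt⟩ : Fin (n-1)) (fun _ => (1 : ZMod 2))]
        simp only [Finset.mem_univ, if_true]
        have h3 : ∀ a b : ZMod 2, a + 1 + (b + 1) = a + b := by decide
        exact h3 ω.1 (∑ k, ω.2 k)
    -- weight inequality
    have hw_ineq : ∀ v : ZMod 2,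
        (1 - p) * (if v + 1 = 0 then p else 1 - p) ≤ p * (if v = 0 then p else 1 - p) := by
      intro v
      have hv : v = 0 ∨ v = 1 := by revert v; decide
      rcases hv with h|h <;> subst h
      · rw [if_neg (by decide), if_pos rfl]
        nlinarith
      · rw [if_pos (by decide), if_neg (by decide)]
        nlinarith
    -- measure inequality
    have hμ : ∀ ω : ZMod 2 × (Fin (n-1) → ZMod 2), ω.1 = 0 →
        muXOR (n-1) p (σ ω) ≤ muXOR (n-1) p ω := by
      intro ω hω
      show (if (σ ω).1 = 0 then p else 1 - p) * (∏ j, (if (σ ω).2 j = 0 then p else 1 - p))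
          ≤ (if ω.1 = 0 then p else 1 - p) * ∏ j, (if ω.2 j = 0 then p else 1 - p)
      have hσ1 : (σ ω).1 = 1 := by show ω.1 + 1 = 1; rw [hω]; decide
      rw [hσ1, hω, if_neg (by decide), if_pos rfl]
      have hσ2 : ∀ j, (σ ω).2 j = if (j:ℕ) = (i0:ℕ) then ω.2 j + 1 else ω.2 j := fun j => rfl
      by_cases hlt : (i0 : ℕ) < n - 1
      · set j0 : Fin (n-1) := ⟨(i0:ℕ), hlt⟩ with hj0
        rw [Finset.prod_eq_mul_prod_sdiff_singleton_of_mem (Finset.mem_univ j0)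
            (fun j => if (σ ω).2 j = 0 then p else 1 - p),
          Finset.prod_eq_mul_prod_sdiff_singleton_of_mem (Finset.mem_univ j0)
            (fun j => if ω.2 j = 0 then p else 1 - p)]
        have hrest : ∀ j ∈ Finset.univ \ {j0},
            (if (σ ω).2 j = 0 then p else 1 - p) = (if ω.2 j = 0 then p else 1 - p) := by
          intro j hj
          rw [Finset.mem_sdiff, Finset.mem_singleton] at hj
          rw [hσ2 j, if_neg (show ¬((j:ℕ) = (i0:ℕ)) from fun hc => hj.2 (Fin.ext hc))]
        rw [Finset.prod_congr rfl hrest]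
        have hval : (σ ω).2 j0 = ω.2 j0 + 1 := by
          rw [hσ2 j0, if_pos rfl]
        rw [hval]
        set R := ∏ j ∈ Finset.univ \ {j0}, (if ω.2 j = 0 then p else 1 - p) with hR
        have hRnn : 0 ≤ R := Finset.prod_nonneg fun j _ => by split_ifs <;> linarith
        calc (1 - p) * ((if ω.2 j0 + 1 = 0 then p else 1 - p) * R)
            = ((1 - p) * (if ω.2 j0 + 1 = 0 then p else 1 - p)) * R := by ring
          _ ≤ (p * (if ω.2 j0 = 0 then p else 1 - p)) * R :=
              mul_le_mul_of_nonneg_right (hw_ineq (ω.2 j0)) hRnn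
          _ = p * ((if ω.2 j0 = 0 then p else 1 - p) * R) := by ring
      · have hrest : ∀ j : Fin (n-1),
            (if (σ ω).2 j = 0 then p else 1 - p) = (if ω.2 j = 0 then p else 1 - p) := by
          intro j
          rw [hσ2 j, if_neg (show ¬((j:ℕ) = (i0:ℕ)) from
            fun hc => hlt (by rw [← hc]; exact j.isLt))]
        rw [Finset.prod_congr rfl fun j _ => hrest j]
        apply mul_le_mul_of_nonneg_right hple
        exact Finset.prod_nonneg fun j _ => by split_ifs <;> linarith
    -- nonnegativity of P
    have hPnn : ∀ z, 0 ≤ P z := by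
      intro z
      apply Finset.sum_nonneg
      intro ω _
      split_ifs
      · exact muXOR_nonneg' (n-1) p (le_of_lt hp0) (le_of_lt hp1) ω
      · exact le_rfl
    -- X ∘ σ
    have hXσ : ∀ ω, X (σ ω) = (ω.1 + 1, (X ω).2) := by
      intro ω
      refine Prod.ext rfl ?_
      funext j
      exact hsh ω j
    have hzz : ∀ a : ZMod 2, a + 1 = 1 ↔ a = 0 := by decide
    -- the key pointwise inequality on P
    have hPle : ∀ y, P (1, y) ≤ P (0, y) := by
      intro y
      have hcond : ∀ ω, (X (σ ω) = (1, y)) ↔ (X ω = ((0:ZMod 2), y)) := by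
        intro ω
        constructor
        · intro h
          have h1 : ω.1 + 1 = 1 := congrArg Prod.fst ((hXσ ω).symm.trans h)
          have h2 : (X ω).2 = y := congrArg Prod.snd ((hXσ ω).symm.trans h)
          exact Prod.ext ((hzz ω.1).mp h1) h2
        · intro h
          have h1 : ω.1 = 0 := congrArg Prod.fst h
          have h2 : (X ω).2 = y := congrArg Prod.snd h
          exact (hXσ ω).trans (Prod.ext ((hzz ω.1).mpr h1) h2)
      rw [hPexp (1, y), hPexp (0, y)]
      calc ∑ ω, (if X ω = (1, y) then muXOR (n-1) p ω else 0)
          = ∑ ω, (if X (σ ω) = (1, y) then muXOR (n-1) p (σ ω) else 0) :=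
            (Fintype.sum_bijective σ hbij _ _ (fun ω => rfl)).symm
        _ ≤ ∑ ω, (if X ω = ((0:ZMod 2), y) then muXOR (n-1) p ω else 0) := by
            apply Finset.sum_le_sum
            intro ω _
            by_cases h : X ω = ((0:ZMod 2), y)
            · rw [if_pos ((hcond ω).mpr h), if_pos h]
              exact hμ ω (congrArg Prod.fst h)
            · rw [if_neg (fun hc => h ((hcond ω).mp hc)), if_neg h]
    -- marginal
    have hmarg : ∀ y, margY P y = P (0, y) + P (1, y) :=
      fun y => zmod2_sum' (fun x => P (x, y))
    -- sum of P(0,y)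
    have hsum0 : ∑ y, P (0, y) = p := by
      rw [Finset.sum_congr rfl fun y _ => hPexp ((0:ZMod 2), y)]
      rw [sum_dist_fst_eq' (muXOR (n-1) p) X 0]
      have h := dist_fst_muXOR' (n-1) p 0
      rw [if_pos rfl] at h
      exact h
    -- each term
    have hterm : ∀ y, margY P y * (⨆ x, P (x, y) / margY P y) = P (0, y) := by
      intro y
      by_cases h : margY P y = 0
      · have hz : P (0, y) + P (1, y) = 0 := by rw [← hmarg y]; exact h
        have h0 : P (0, y) = 0 := by
          have := hPnn ((0:ZMod 2), y)
          have := hPnn ((1:ZMod 2), y)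
          linarith
        rw [h, zero_mul, h0]
      · have hpos : 0 < margY P y :=
          lt_of_le_of_ne (by rw [hmarg y]; exact add_nonneg (hPnn _) (hPnn _)) (Ne.symm h)
        have hdiv : P (1, y) / margY P y ≤ P (0, y) / margY P y := by
          rw [div_eq_mul_inv, div_eq_mul_inv]
          exact mul_le_mul_of_nonneg_right (hPle y) (inv_nonneg.mpr (le_of_lt hpos))
        rw [zmod2_sup' (fun x => P (x, y) / margY P y) hdiv, mul_comm]
        exact div_mul_cancel₀ _ h
    show condMinEnt P = - Real.log p
    unfold condMinEnt
    rw [Finset.sum_congr rfl fun y _ => hterm y, hsum0]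
  · -- minEnt part
    unfold minEnt
    have h0 : dist (muXOR (n-1) p) Prod.fst 0 = p := by
      have h := dist_fst_muXOR' (n-1) p 0
      rw [if_pos rfl] at h
      exact h
    have h1 : dist (muXOR (n-1) p) Prod.fst 1 = 1 - p := by
      have h := dist_fst_muXOR' (n-1) p 1
      rw [if_neg (show ¬((1:ZMod 2) = 0) by decide)] at h
      exact h
    have hle : dist (muXOR (n-1) p) Prod.fst 1 ≤ dist (muXOR (n-1) p) Prod.fst 0 := by
      rw [h0, h1]; exact hple
    rw [zmod2_sup' _ hle, h0]
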